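/- Let 1 ≤ p < ∞ and let ℓ_p^+ = {x ∈ ℓ_p : x(n) ≥ 0 for all n ∈ ℕ} be the positive cone of the real sequence space ℓ_p. Then the set of nonsupport points of ℓ_p^+ equals {x ∈ ℓ_p : x(n) > 0 for all n ∈ ℕ}. -/

import Mathlib

open scoped ENNReal

private noncomputable def evalCLM (p : ℝ≥0∞) [Fact (1 ≤ p)] (n : ℕ) :
    lp (fun _ : ℕ => ℝ) p →L[ℝ] ℝ :=
  LinearMap.mkContinuous
    { toFun := fun f => f n
      map_add' := fun f g => rfl
      map_smul' := fun c f => rfl } 1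
    (fun f => by
      show ‖f n‖ ≤ 1 * ‖f‖
      simpa using lp.norm_apply_le_norm (one_pos.trans_le (Fact.out : 1 ≤ p)).ne' f n)

private noncomputable def eLp (p : ℝ≥0∞) (n : ℕ) : lp (fun _ : ℕ => ℝ) p :=
  lp.single p n 1

private lemma eLp_self (p : ℝ≥0∞) (n : ℕ) : (eLp p n) n = 1 :=
  lp.single_apply_self p n 1

private lemma eLp_ne (p : ℝ≥0∞) {m n : ℕ} (h : m ≠ n) : (eLp p n) m = 0 :=
  lp.single_apply_ne p n 1 h

@[simp] private lemma evalCLM_apply (p : ℝ≥0∞) [Fact (1 ≤ p)] (n : ℕ)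
    (f : lp (fun _ : ℕ => ℝ) p) : evalCLM p n f = f n := rfl

/-- For `1 ≤ p < ∞`, the set of nonsupport points of the positive cone
`ℓ_p^+ = {x ∈ ℓ_p : x(n) ≥ 0 ∀ n}` is `{x ∈ ℓ_p : x(n) > 0 ∀ n}`. -/
theorem stmt_9 (p : ℝ≥0∞) [Fact (1 ≤ p)] (hp : p ≠ ∞) :
    {x ∈ {y : lp (fun _ : ℕ => ℝ) p | ∀ n, 0 ≤ y n} |
        ¬ ∃ f : lp (fun _ : ℕ => ℝ) p →L[ℝ] ℝ, f ≠ 0 ∧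
          ∀ y ∈ {y : lp (fun _ : ℕ => ℝ) p | ∀ n, 0 ≤ y n}, f y ≤ f x} =
      {x : lp (fun _ : ℕ => ℝ) p | ∀ n, 0 < x n} := by
  ext x
  simp only [Set.mem_setOf_eq, Set.mem_sep_iff]
  constructor
  · rintro ⟨hx, hns⟩ n
    rcases lt_or_eq_of_le (hx n) with h | h
    · exact h
    exfalso
    apply hns
    refine ⟨-(evalCLM p n), ?_, ?_⟩
    · intro h0
      have h1 : (-(evalCLM p n)) (eLp p n) = 0 := by rw [h0]; rfl
      simp only [ContinuousLinearMap.neg_apply, evalCLM_apply, eLp_self] at h1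
      norm_num at h1
    · intro y hy
      simp only [ContinuousLinearMap.neg_apply, evalCLM_apply, ← h, neg_zero]
      exact neg_nonpos.2 (hy n)
  · intro hx
    refine ⟨fun n => (hx n).le, ?_⟩
    rintro ⟨f, hf0, hsup⟩
    have hzero : ∀ n, (0 : lp (fun _ : ℕ => ℝ) p) n = (0 : ℝ) := fun n => rfl
    have h0 : (0 : ℝ) ≤ f x := by
      have := hsup 0 (fun n => (hzero n).le)
      simpa using this
    have h2 : f x ≤ 0 := by
      have hmem : ∀ n, (0 : ℝ) ≤ ((2 : ℝ) • x) n := by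
        intro n
        have : ((2 : ℝ) • x) n = 2 * x n := rfl
        rw [this]
        nlinarith [hx n]
      have := hsup ((2 : ℝ) • x) hmem
      simp only [map_smul, smul_eq_mul] at this
      linarith
    have hfx : f x = 0 := le_antisymm h2 h0
    have hsingle : ∀ n, f (eLp p n) = 0 := by
      intro n
      have hle : f (eLp p n) ≤ 0 := by
        have hmem : ∀ m, (0 : ℝ) ≤ (eLp p n) m := by
          intro m
          rcases eq_or_ne m n with rfl | hm
          · simp [eLp_self]
          · simp [eLp_ne p hm]
        have := hsup _ hmem
        rwa [hfx] at this
      have hge : (0 : ℝ) ≤ f (eLp p n) := by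
        have hmem : ∀ m, (0 : ℝ) ≤ (x - (x n) • eLp p n) m := by
          intro m
          have hc : (x - (x n) • eLp p n) m
              = x m - x n * (eLp p n) m := rfl
          rw [hc]
          rcases eq_or_ne m n with rfl | hm
          · simp [eLp_self]
          · simp [eLp_ne p hm, (hx m).le]
        have := hsup _ hmem
        rw [map_sub, map_smul, hfx, smul_eq_mul] at this
        nlinarith [hx n]
      linarith
    apply hf0
    ext g
    have hs : HasSum (fun i : ℕ => lp.single p i (g i : ℝ)) g := lp.hasSum_single hp g
    have hs2 := f.hasSum hs
    have heq : (fun i : ℕ => f (lp.single p i (g i : ℝ))) = fun _ => (0 : ℝ) := by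
      funext i
      have : lp.single p i (g i : ℝ) = (g i) • eLp p i := by
        rw [eLp, ← lp.single_smul, smul_eq_mul, mul_one]
      rw [this, map_smul, hsingle, smul_zero]
    rw [heq] at hs2
    simpa using hs2.unique hasSum_zero
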